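/- Let Ψ be a root datum with finite automorphism group Γ stabilizing a base, and suppose β, β′ ∈ Φ are distinct with i*β = i*β′. Then Σ_{θ ∈ Γ·β} ⟨β′, θ^∨⟩ = Σ_{θ ∈ Γ·β} ⟨β, θ^∨⟩, and this common value equals 2 if the orbit Γ·β is pairwise orthogonal and 1 otherwise. -/

import Mathlib

open scoped BigOperators Classical

/-- A (not necessarily reduced) root datum `Ψ = (X*, Φ, X_*, Φ^∨)`:
dual lattices `X`, `Y` in perfect duality, a finite set of roots, and a
coroot map satisfying the usual axioms. -/
structure ZRootDatum (X Y : Type) [AddCommGroup X] [AddCommGroup Y] : Type where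
  pair : X →+ Y →+ ℤ
  perfect : Function.Bijective fun x : X => pair x
  perfect' : Function.Bijective fun y : Y => pair.flip y
  roots : Finset X
  coroot : X → Y
  pair_self : ∀ β ∈ roots, pair β (coroot β) = 2
  reflect_mem : ∀ β ∈ roots, ∀ x ∈ roots, x - pair x (coroot β) • β ∈ roots
  coreflect_mem : ∀ β ∈ roots, ∀ β' ∈ roots,
    ∃ β'' ∈ roots, coroot β' - pair β (coroot β') • coroot β = coroot β''

/-- The multiplicative group structure (composition) that `AddAut A` carried in the older
Mathlib; the current Mathlib makes `AddAut A` an additive group instead. -/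
instance AddAut.group (A : Type*) [Add A] : Group (AddAut A) where
  mul g h := AddEquiv.trans h g
  one := AddEquiv.refl _
  inv := AddEquiv.symm
  mul_assoc _ _ _ := rfl
  one_mul _ := rfl
  mul_one _ := rfl
  inv_mul_cancel := AddEquiv.self_trans_symm

variable {X Y Γ : Type} [AddCommGroup X] [AddCommGroup Y] [Group Γ]

/-- The Weyl group of a root datum: the subgroup of `Aut(X)` generated by the
reflections `w_β : x ↦ x - ⟨x, β^∨⟩β` through the roots. -/
def ZRootDatum.weylGroup (Ψ : ZRootDatum X Y) : Subgroup (AddAut X) :=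
  Subgroup.closure {w : AddAut X | ∃ β ∈ Ψ.roots, ∀ x, w x = x - Ψ.pair x (Ψ.coroot β) • β}

/-- `Δ` is a base (system of simple roots) of the root datum. -/
def ZRootDatum.IsBase (Ψ : ZRootDatum X Y) (Δ : Finset X) : Prop :=
  (↑Δ : Set X) ⊆ ↑Ψ.roots ∧
  LinearIndependent ℤ (fun a : ↥(↑Δ : Set X) => (a : X)) ∧
  ∀ β ∈ Ψ.roots, ∃ c : X → ℤ,
    β = ∑ a ∈ Δ, c a • a ∧ ((∀ a ∈ Δ, 0 ≤ c a) ∨ (∀ a ∈ Δ, c a ≤ 0))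

/-- A group `Γ` acting (via `ρ` on `X*` and `ρ'` on `X_*`) by automorphisms of
the root datum `Ψ`. -/
structure RDAction (Ψ : ZRootDatum X Y) (ρ : Γ →* AddAut X) (ρ' : Γ →* AddAut Y) : Prop where
  pair_eq : ∀ γ x y, Ψ.pair (ρ γ x) (ρ' γ y) = Ψ.pair x y
  root_mem : ∀ γ, ∀ β ∈ Ψ.roots, ρ γ β ∈ Ψ.roots
  coroot_eq : ∀ γ, ∀ β ∈ Ψ.roots, Ψ.coroot (ρ γ β) = ρ' γ (Ψ.coroot β)

/-- The norm map `N : x ↦ ∑_{γ ∈ Γ} γ·x`.  For a free lattice `X`, its kernel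
is exactly the kernel of the projection of `X` onto the coinvariants `X_Γ`
modulo torsion. -/
noncomputable def normMap [Fintype Γ] (ρ : Γ →* AddAut X) : X →+ X :=
  ∑ γ : Γ, ((ρ γ : X ≃+ X) : X →+ X)

/-- The projection `i* : X* → X̄*` onto the coinvariant lattice modulo torsion. -/
noncomputable def istar [Fintype Γ] (ρ : Γ →* AddAut X) : X →+ X ⧸ (normMap ρ).ker :=
  QuotientAddGroup.mk' (normMap ρ).ker


/-- The `Γ`-orbit of `β`. -/
noncomputable def orb [Fintype Γ] (ρ : Γ →* AddAut X) (β : X) : Finset X :=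
  Finset.image (fun γ : Γ => ρ γ β) Finset.univ

/-- A set of roots is (pairwise) orthogonal if distinct members pair to `0`
with each other's coroots. -/
def IsOrthogonalSet (Ψ : ZRootDatum X Y) (S : Finset X) : Prop :=
  ∀ θ ∈ S, ∀ θ' ∈ S, θ ≠ θ' → Ψ.pair θ (Ψ.coroot θ') = 0

/-- The (unique, when it exists) root in the orbit of `β` distinct from and not
orthogonal to `θ`. -/
noncomputable def partner [Fintype Γ] (Ψ : ZRootDatum X Y) (ρ : Γ →* AddAut X) (β θ : X) : X :=
  if h : ∃ θ', θ' ∈ orb ρ β ∧ θ' ≠ θ ∧ Ψ.pair θ (Ψ.coroot θ') ≠ 0 then h.choose else 0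

/-- The orthogonal `Γ`-orbit `Ξ_β` attached to `β`:  `Γ·β` itself if that orbit
is orthogonal, and `{θ + θ' : θ ∈ Γ·β}` otherwise. -/
noncomputable def Xi [Fintype Γ] (Ψ : ZRootDatum X Y) (ρ : Γ →* AddAut X) (β : X) : Finset X :=
  if IsOrthogonalSet Ψ (orb ρ β) then orb ρ β
  else (orb ρ β).image fun θ => θ + partner Ψ ρ β θ

/-- The restricted coroot `α^∨ = (|Γ·β|/|Ξ_β|) ∑_{ξ ∈ Ξ_β} ξ^∨` attached to
`α = i*(β)`. -/
noncomputable def restCoroot [Fintype Γ] (Ψ : ZRootDatum X Y) (ρ : Γ →* AddAut X) (β : X) : Y :=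
  (((orb ρ β).card / (Xi Ψ ρ β).card : ℕ) : ℤ) • ∑ ξ ∈ Xi Ψ ρ β, Ψ.coroot ξ



namespace ZRootDatum
variable (Ψ : ZRootDatum X Y)

lemma pair_zsmul_left (n : ℤ) (x : X) (y : Y) : Ψ.pair (n • x) y = n * Ψ.pair x y := by
  rw [map_zsmul]; simp [smul_eq_mul]

lemma pair_sub_left (x x' : X) (y : Y) : Ψ.pair (x - x') y = Ψ.pair x y - Ψ.pair x' y := by
  rw [map_sub]; simp

lemma pair_add_left (x x' : X) (y : Y) : Ψ.pair (x + x') y = Ψ.pair x y + Ψ.pair x' y := by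
  rw [map_add]; simp

lemma pair_neg_left (x : X) (y : Y) : Ψ.pair (-x) y = - Ψ.pair x y := by
  rw [map_neg]; simp

lemma pair_sum_left {ι : Type} (s : Finset ι) (f : ι → X) (y : Y) :
    Ψ.pair (∑ i ∈ s, f i) y = ∑ i ∈ s, Ψ.pair (f i) y := by
  rw [map_sum]; exact AddMonoidHom.finset_sum_apply _ _ _

lemma root_ne_zero {θ : X} (hθ : θ ∈ Ψ.roots) : θ ≠ 0 := by
  intro h
  have := Ψ.pair_self θ hθ
  rw [h] at this; simp at this

lemma neg_root_mem {θ : X} (hθ : θ ∈ Ψ.roots) : -θ ∈ Ψ.roots := by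
  have := Ψ.reflect_mem θ hθ θ hθ
  rw [Ψ.pair_self θ hθ] at this
  convert this using 1
  rw [two_smul]; abel

/-- no arithmetic progressions inside the finite root set -/
lemma noAP [Module.Free ℤ X] (x ζ : X) (hζ : ζ ≠ 0)
    (h : ∀ k : ℕ, x + (k : ℤ) • ζ ∈ Ψ.roots) : False := by
  have hinj : Function.Injective (fun k : ℕ => x + (k : ℤ) • ζ) := by
    intro a b hab
    simp only [add_right_inj] at hab
    have : ((a : ℤ) - b) • ζ = 0 := by rw [sub_smul, hab]; abel
    rcases smul_eq_zero.mp this with h' | h'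
    · exact_mod_cast sub_eq_zero.mp h'
    · exact absurd h' hζ
  have : (↑Ψ.roots : Set X).Infinite :=
    Set.infinite_of_injective_forall_mem hinj (fun k => h k)
  exact this (Ψ.roots.finite_toSet)

end ZRootDatum

namespace ZRootDatum
variable (Ψ : ZRootDatum X Y)

lemma two_two [Module.Free ℤ X] {r1 r2 : X} (h1 : r1 ∈ Ψ.roots) (h2 : r2 ∈ Ψ.roots)
    {ε : ℤ} (hε : ε = 1 ∨ ε = -1)
    (hp : Ψ.pair r1 (Ψ.coroot r2) = 2 * ε) (hq : Ψ.pair r2 (Ψ.coroot r1) = 2 * ε)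
    (hζ : r1 - ε • r2 ≠ 0) : False := by
  set ζ := r1 - ε • r2 with hζdef
  have hε2 : ε * ε = 1 := by rcases hε with h | h <;> (rw [h]; ring)
  have hζ1 : Ψ.pair ζ (Ψ.coroot r1) = 0 := by
    rw [hζdef, Ψ.pair_sub_left, Ψ.pair_zsmul_left, Ψ.pair_self r1 h1, hq]; linarith [hε2]
  have hζ2 : Ψ.pair ζ (Ψ.coroot r2) = 0 := by
    rw [hζdef, Ψ.pair_sub_left, Ψ.pair_zsmul_left, Ψ.pair_self r2 h2, hp]; ring
  have key : ∀ k : ℕ, r1 - (2 * (k : ℤ)) • ζ ∈ Ψ.roots := by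
    intro k; induction k with
    | zero => simpa using h1
    | succ n ih =>
      set v := r1 - (2 * (n : ℤ)) • ζ with hv
      have hPv1 : Ψ.pair v (Ψ.coroot r1) = 2 := by
        rw [hv, Ψ.pair_sub_left, Ψ.pair_zsmul_left, hζ1, Ψ.pair_self r1 h1]; ring
      have hv1 : v - (2 : ℤ) • r1 ∈ Ψ.roots := by
        have := Ψ.reflect_mem r1 h1 v ih; rwa [hPv1] at this
      have hPv2 : Ψ.pair (v - (2 : ℤ) • r1) (Ψ.coroot r2) = -2 * ε := by
        rw [Ψ.pair_sub_left, Ψ.pair_zsmul_left, hv, Ψ.pair_sub_left, Ψ.pair_zsmul_left,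
          hζ2, hp]; ring
      have hv2 := Ψ.reflect_mem r2 h2 _ hv1
      rw [hPv2] at hv2
      convert hv2 using 1
      rw [hζdef, hv, hζdef]
      push_cast
      module
  refine Ψ.noAP r1 ((-2 : ℤ) • ζ) (by simpa using hζ) (fun k => ?_)
  rw [smul_smul]
  have heq : r1 + ((k : ℤ) * -2) • ζ = r1 - (2 * (k : ℤ)) • ζ := by module
  rw [heq]; exact key k

lemma coroot_unique [Module.Free ℤ X] {r : X} (hr : r ∈ Ψ.roots) (y : Y)
    (h2 : Ψ.pair r y = 2)
    (hrefl : ∀ x ∈ Ψ.roots, x - Ψ.pair x y • r ∈ Ψ.roots) :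
    ∀ x ∈ Ψ.roots, Ψ.pair x y = Ψ.pair x (Ψ.coroot r) := by
  intro x hx
  by_contra hne
  set e := Ψ.pair x y - Ψ.pair x (Ψ.coroot r) with he
  have he0 : e ≠ 0 := sub_ne_zero.mpr hne
  have key : ∀ k : ℕ, x + ((k : ℤ) * e) • r ∈ Ψ.roots := by
    intro k; induction k with
    | zero => simpa using hx
    | succ n ih =>
      set z := x + ((n : ℤ) * e) • r with hz
      have hPzy : Ψ.pair z y = Ψ.pair x y + (n : ℤ) * e * 2 := by
        rw [hz, Ψ.pair_add_left, Ψ.pair_zsmul_left, h2]; try ring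
      have hz1 : z - (Ψ.pair x y + (n : ℤ) * e * 2) • r ∈ Ψ.roots := by
        have := hrefl z ih; rwa [hPzy] at this
      set z1 := z - (Ψ.pair x y + (n : ℤ) * e * 2) • r with hz1def
      have hPz1 : Ψ.pair z1 (Ψ.coroot r) =
          Ψ.pair x (Ψ.coroot r) - 2 * Ψ.pair x y - 2 * ((n : ℤ) * e) := by
        rw [hz1def, Ψ.pair_sub_left, Ψ.pair_zsmul_left, hz, Ψ.pair_add_left,
          Ψ.pair_zsmul_left, Ψ.pair_self r hr]; ring
      have hz2 := Ψ.reflect_mem r hr z1 hz1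
      rw [hPz1] at hz2
      convert hz2 using 1
      rw [hz1def, hz, he]
      push_cast
      module
  refine Ψ.noAP x (e • r) (smul_ne_zero he0 (Ψ.root_ne_zero hr)) (fun k => ?_)
  rw [smul_smul]; exact key k

end ZRootDatum

namespace ZRootDatum
variable (Ψ : ZRootDatum X Y)

lemma pair_zsmul_right (x : X) (n : ℤ) (y : Y) : Ψ.pair x (n • y) = n * Ψ.pair x y := by
  rw [map_zsmul]; simp [smul_eq_mul]

lemma pair_sub_right (x : X) (y y' : Y) : Ψ.pair x (y - y') = Ψ.pair x y - Ψ.pair x y' := by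
  rw [map_sub]

lemma pair_sum_right {ι : Type} (x : X) (s : Finset ι) (f : ι → Y) :
    Ψ.pair x (∑ i ∈ s, f i) = ∑ i ∈ s, Ψ.pair x (f i) := map_sum _ _ _

noncomputable def B (x y : X) : ℤ :=
  ∑ θ ∈ Ψ.roots, Ψ.pair x (Ψ.coroot θ) * Ψ.pair y (Ψ.coroot θ)

lemma B_symm (x y : X) : Ψ.B x y = Ψ.B y x :=
  Finset.sum_congr rfl (fun _ _ => mul_comm _ _)

lemma B_self_nonneg (x : X) : 0 ≤ Ψ.B x x :=
  Finset.sum_nonneg (fun _ _ => mul_self_nonneg _)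

lemma B_root_pos {θ : X} (hθ : θ ∈ Ψ.roots) : 0 < Ψ.B θ θ := by
  have h4 : Ψ.pair θ (Ψ.coroot θ) * Ψ.pair θ (Ψ.coroot θ) = 4 := by
    rw [Ψ.pair_self θ hθ]; ring
  have : (4 : ℤ) ≤ Ψ.B θ θ := by
    calc (4:ℤ) = Ψ.pair θ (Ψ.coroot θ) * Ψ.pair θ (Ψ.coroot θ) := h4.symm
    _ ≤ _ := Finset.single_le_sum
        (f := fun θ' => Ψ.pair θ (Ψ.coroot θ') * Ψ.pair θ (Ψ.coroot θ'))
        (fun θ' _ => mul_self_nonneg _) hθ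
  linarith

lemma B_sub_left (x x' y : X) : Ψ.B (x - x') y = Ψ.B x y - Ψ.B x' y := by
  simp [B, Ψ.pair_sub_left, sub_mul, Finset.sum_sub_distrib]

lemma B_add_left (x x' y : X) : Ψ.B (x + x') y = Ψ.B x y + Ψ.B x' y := by
  simp [B, Ψ.pair_add_left, add_mul, Finset.sum_add_distrib]

lemma B_zsmul_left (n : ℤ) (x y : X) : Ψ.B (n • x) y = n * Ψ.B x y := by
  simp [B, Ψ.pair_zsmul_left, Finset.mul_sum, mul_assoc]

lemma B_sub_right (x y y' : X) : Ψ.B x (y - y') = Ψ.B x y - Ψ.B x y' := by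
  rw [B_symm, B_sub_left, B_symm Ψ y x, B_symm Ψ y' x]

lemma B_add_right (x y y' : X) : Ψ.B x (y + y') = Ψ.B x y + Ψ.B x y' := by
  rw [B_symm, B_add_left, B_symm Ψ y x, B_symm Ψ y' x]

lemma B_zsmul_right (n : ℤ) (x y : X) : Ψ.B x (n • y) = n * Ψ.B x y := by
  rw [B_symm, B_zsmul_left, B_symm]

lemma B_neg_right (x y : X) : Ψ.B x (-y) = - Ψ.B x y := by
  have : -y = (-1 : ℤ) • y := by module
  rw [this, B_zsmul_right]; ring

lemma B_zero_left (y : X) : Ψ.B 0 y = 0 := by simp [B]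

lemma B_sum_left {ι : Type} (s : Finset ι) (f : ι → X) (y : X) :
    Ψ.B (∑ i ∈ s, f i) y = ∑ i ∈ s, Ψ.B (f i) y := by
  classical
  induction s using Finset.cons_induction with
  | empty => simp [B_zero_left]
  | cons a s ha ih => rw [Finset.sum_cons, B_add_left, ih, Finset.sum_cons]

lemma B_sum_right {ι : Type} (x : X) (s : Finset ι) (f : ι → X) :
    Ψ.B x (∑ i ∈ s, f i) = ∑ i ∈ s, Ψ.B x (f i) := by
  rw [B_symm, B_sum_left]
  exact Finset.sum_congr rfl (fun i _ => Ψ.B_symm (f i) x)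

lemma B_cs {x : X} (hx : x ∈ Ψ.roots) (y : X) :
    Ψ.B x y * Ψ.B x y ≤ Ψ.B x x * Ψ.B y y := by
  set a := Ψ.B x x with ha
  set m := Ψ.B x y with hm
  have key : Ψ.B (a • y - m • x) (a • y - m • x) = a * (a * Ψ.B y y - m * m) := by
    simp only [B_sub_left, B_sub_right, B_zsmul_left, B_zsmul_right]
    rw [B_symm Ψ y x]
    simp only [← ha, ← hm]
    ring
  have h0 : 0 ≤ a * (a * Ψ.B y y - m * m) := key ▸ Ψ.B_self_nonneg _
  have hapos : 0 < a := Ψ.B_root_pos hx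
  nlinarith

end ZRootDatum

namespace ZRootDatum
variable (Ψ : ZRootDatum X Y) [Module.Free ℤ X]

/-- `⟨s_{θ0} x, θ''^∨⟩ = ⟨x, (s_{θ0} θ'')^∨⟩` for roots `x`, `θ''`. -/
lemma pair_reflect_coroot {θ0 : X} (hθ0 : θ0 ∈ Ψ.roots) {θ'' : X} (hθ'' : θ'' ∈ Ψ.roots)
    {x : X} (hx : x ∈ Ψ.roots) :
    Ψ.pair (x - Ψ.pair x (Ψ.coroot θ0) • θ0) (Ψ.coroot θ'')
      = Ψ.pair x (Ψ.coroot (θ'' - Ψ.pair θ'' (Ψ.coroot θ0) • θ0)) := by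
  have hr : θ'' - Ψ.pair θ'' (Ψ.coroot θ0) • θ0 ∈ Ψ.roots := Ψ.reflect_mem θ0 hθ0 θ'' hθ''
  have lhs_eq : Ψ.pair (x - Ψ.pair x (Ψ.coroot θ0) • θ0) (Ψ.coroot θ'')
      = Ψ.pair x (Ψ.coroot θ'' - Ψ.pair θ0 (Ψ.coroot θ'') • Ψ.coroot θ0) := by
    rw [Ψ.pair_sub_left, Ψ.pair_zsmul_left, Ψ.pair_sub_right, Ψ.pair_zsmul_right]; ring
  rw [lhs_eq]
  refine Ψ.coroot_unique hr (Ψ.coroot θ'' - Ψ.pair θ0 (Ψ.coroot θ'') • Ψ.coroot θ0)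
    ?_ ?_ x hx
  · -- pairs to 2
    rw [Ψ.pair_sub_right, Ψ.pair_zsmul_right, Ψ.pair_sub_left, Ψ.pair_sub_left,
      Ψ.pair_zsmul_left, Ψ.pair_zsmul_left, Ψ.pair_self θ'' hθ'', Ψ.pair_self θ0 hθ0]
    ring
  · -- reflection property
    intro z hz
    have h1 : z - Ψ.pair z (Ψ.coroot θ0) • θ0 ∈ Ψ.roots := Ψ.reflect_mem θ0 hθ0 z hz
    set z1 := z - Ψ.pair z (Ψ.coroot θ0) • θ0 with hz1
    have h2 : z1 - Ψ.pair z1 (Ψ.coroot θ'') • θ'' ∈ Ψ.roots := Ψ.reflect_mem θ'' hθ'' z1 h1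
    set z2 := z1 - Ψ.pair z1 (Ψ.coroot θ'') • θ'' with hz2
    have h3 : z2 - Ψ.pair z2 (Ψ.coroot θ0) • θ0 ∈ Ψ.roots := Ψ.reflect_mem θ0 hθ0 z2 h2
    have e1 : Ψ.pair z1 (Ψ.coroot θ'')
        = Ψ.pair z (Ψ.coroot θ'') - Ψ.pair z (Ψ.coroot θ0) * Ψ.pair θ0 (Ψ.coroot θ'') := by
      rw [hz1, Ψ.pair_sub_left, Ψ.pair_zsmul_left]
    have e2 : Ψ.pair z2 (Ψ.coroot θ0)
        = - Ψ.pair z (Ψ.coroot θ0) - Ψ.pair z1 (Ψ.coroot θ'') * Ψ.pair θ'' (Ψ.coroot θ0) := by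
      rw [hz2, Ψ.pair_sub_left, Ψ.pair_zsmul_left, hz1, Ψ.pair_sub_left, Ψ.pair_zsmul_left,
        Ψ.pair_self θ0 hθ0]
      ring
    have goal_eq : z - Ψ.pair z (Ψ.coroot θ'' - Ψ.pair θ0 (Ψ.coroot θ'') • Ψ.coroot θ0)
          • (θ'' - Ψ.pair θ'' (Ψ.coroot θ0) • θ0)
        = z2 - Ψ.pair z2 (Ψ.coroot θ0) • θ0 := by
      rw [e2, e1, hz2, hz1, Ψ.pair_sub_right, Ψ.pair_zsmul_right, e1]
      module
    rw [goal_eq]; exact h3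

/-- reflection invariance of `B` on roots -/
lemma B_reflect {θ0 : X} (hθ0 : θ0 ∈ Ψ.roots) {x : X} (hx : x ∈ Ψ.roots)
    {y : X} (hy : y ∈ Ψ.roots) :
    Ψ.B (x - Ψ.pair x (Ψ.coroot θ0) • θ0) (y - Ψ.pair y (Ψ.coroot θ0) • θ0) = Ψ.B x y := by
  have hstep : Ψ.B (x - Ψ.pair x (Ψ.coroot θ0) • θ0) (y - Ψ.pair y (Ψ.coroot θ0) • θ0)
      = ∑ θ'' ∈ Ψ.roots, Ψ.pair x (Ψ.coroot (θ'' - Ψ.pair θ'' (Ψ.coroot θ0) • θ0))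
          * Ψ.pair y (Ψ.coroot (θ'' - Ψ.pair θ'' (Ψ.coroot θ0) • θ0)) := by
    refine Finset.sum_congr rfl (fun θ'' hθ'' => ?_)
    rw [Ψ.pair_reflect_coroot hθ0 hθ'' hx, Ψ.pair_reflect_coroot hθ0 hθ'' hy]
  rw [hstep]
  refine Finset.sum_nbij' (fun θ'' => θ'' - Ψ.pair θ'' (Ψ.coroot θ0) • θ0)
    (fun θ'' => θ'' - Ψ.pair θ'' (Ψ.coroot θ0) • θ0)
    (fun a ha => Ψ.reflect_mem θ0 hθ0 a ha)
    (fun a ha => Ψ.reflect_mem θ0 hθ0 a ha) ?_ ?_ ?_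
  · intro a ha
    rw [Ψ.pair_sub_left, Ψ.pair_zsmul_left, Ψ.pair_self θ0 hθ0]
    module
  · intro a ha
    rw [Ψ.pair_sub_left, Ψ.pair_zsmul_left, Ψ.pair_self θ0 hθ0]
    module
  · intro a ha; dsimp only

/-- key identity :  `⟨x, θ^∨⟩ · B(θ,θ) = 2 · B(x,θ)` for roots. -/
lemma B_ki {x θ : X} (hx : x ∈ Ψ.roots) (hθ : θ ∈ Ψ.roots) :
    Ψ.pair x (Ψ.coroot θ) * Ψ.B θ θ = 2 * Ψ.B x θ := by
  have h := Ψ.B_reflect hθ hx hθ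
  have hsθ : θ - Ψ.pair θ (Ψ.coroot θ) • θ = -θ := by
    rw [Ψ.pair_self θ hθ]; module
  rw [hsθ, B_neg_right, B_sub_left, B_zsmul_left] at h
  linarith

end ZRootDatum

section Orbit

variable [Fintype Γ] {Ψ : ZRootDatum X Y} {ρ : Γ →* AddAut X} {ρ' : Γ →* AddAut Y}

lemma rho_inv_apply (ρ : Γ →* AddAut X) (γ : Γ) (x : X) : ρ γ⁻¹ (ρ γ x) = x := by
  rw [map_inv]; exact AddEquiv.symm_apply_apply (ρ γ) x

lemma rho_apply_inv (ρ : Γ →* AddAut X) (γ : Γ) (x : X) : ρ γ (ρ γ⁻¹ x) = x := by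
  rw [map_inv]; exact AddEquiv.apply_symm_apply (ρ γ) x

lemma pair_gamma (hact : RDAction Ψ ρ ρ') (γ : Γ) (x : X) {v : X} (hv : v ∈ Ψ.roots) :
    Ψ.pair (ρ γ x) (Ψ.coroot (ρ γ v)) = Ψ.pair x (Ψ.coroot v) := by
  rw [hact.coroot_eq γ v hv, hact.pair_eq]

lemma mem_orb {β θ : X} : θ ∈ orb ρ β ↔ ∃ γ : Γ, ρ γ β = θ := by
  simp [orb]

lemma self_mem_orb {β : X} : β ∈ orb ρ β :=
  mem_orb.mpr ⟨1, by rw [map_one]; rfl⟩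

lemma orb_sub_roots (hact : RDAction Ψ ρ ρ') {β θ : X} (hβ : β ∈ Ψ.roots)
    (hθ : θ ∈ orb ρ β) : θ ∈ Ψ.roots := by
  obtain ⟨γ, rfl⟩ := mem_orb.mp hθ
  exact hact.root_mem γ β hβ

lemma mem_orb_of_mem {β θ : X} (hθ : θ ∈ orb ρ β) (γ : Γ) : ρ γ θ ∈ orb ρ β := by
  obtain ⟨δ, rfl⟩ := mem_orb.mp hθ
  refine mem_orb.mpr ⟨γ * δ, ?_⟩
  rw [map_mul]; rfl

lemma orb_image (β : X) (γ : Γ) : (orb ρ β).image (ρ γ) = orb ρ β := by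
  ext θ
  constructor
  · rintro hθ
    obtain ⟨t, ht, rfl⟩ := Finset.mem_image.mp hθ
    exact mem_orb_of_mem ht γ
  · intro hθ
    refine Finset.mem_image.mpr ⟨ρ γ⁻¹ θ, mem_orb_of_mem hθ γ⁻¹, rho_apply_inv ρ γ θ⟩

lemma B_gamma (hact : RDAction Ψ ρ ρ') (γ : Γ) (x y : X) :
    Ψ.B (ρ γ x) (ρ γ y) = Ψ.B x y := by
  unfold ZRootDatum.B
  refine Finset.sum_nbij' (fun θ => ρ γ⁻¹ θ) (fun v => ρ γ v)
    (fun a ha => hact.root_mem γ⁻¹ a ha) (fun a ha => hact.root_mem γ a ha)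
    (fun a _ => rho_apply_inv ρ γ a) (fun a _ => rho_inv_apply ρ γ a) ?_
  intro a ha
  have h1 : a = ρ γ (ρ γ⁻¹ a) := (rho_apply_inv ρ γ a).symm
  rw [h1, pair_gamma hact γ x (hact.root_mem γ⁻¹ a ha),
    pair_gamma hact γ y (hact.root_mem γ⁻¹ a ha), rho_inv_apply]

lemma B_orb_eq (hact : RDAction Ψ ρ ρ') {β θ : X} (hθ : θ ∈ orb ρ β) :
    Ψ.B θ θ = Ψ.B β β := by
  obtain ⟨γ, rfl⟩ := mem_orb.mp hθ
  exact B_gamma hact γ β β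

lemma normMap_apply (ρ : Γ →* AddAut X) (x : X) : normMap ρ x = ∑ γ : Γ, ρ γ x := by
  rw [normMap, AddMonoidHom.finset_sum_apply]
  rfl

lemma norm_orb {β θ : X} (hθ : θ ∈ orb ρ β) : normMap ρ θ = normMap ρ β := by
  obtain ⟨δ, rfl⟩ := mem_orb.mp hθ
  rw [normMap_apply, normMap_apply]
  refine Fintype.sum_equiv (Equiv.mulRight δ) _ _ (fun γ => ?_)
  simp only [Equiv.coe_mulRight]
  rw [map_mul]
  rfl

lemma norm_root_ne_zero [Module.Free ℤ X] {Δ : Finset X} (hΔ : Ψ.IsBase Δ)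
    (hstab : ∀ γ : Γ, ∀ a ∈ Δ, ρ γ a ∈ Δ) {r : X} (hr : r ∈ Ψ.roots) :
    normMap ρ r ≠ 0 := by
  intro h0
  obtain ⟨c, hrep, hsign⟩ := hΔ.2.2 r hr
  -- the collected coefficient function
  set g : ↥(↑Δ : Set X) → ℤ :=
    fun b => ∑ γ : Γ, ∑ a ∈ Δ.filter (fun a => ρ γ a = ↑b), c a with hg
  have hsum : ∑ b : ↥(↑Δ : Set X), g b • (b : X) = 0 := by
    have e1 : ∀ b : ↥(↑Δ : Set X), g b • (b : X)
        = ∑ γ : Γ, ∑ a ∈ Δ.filter (fun a => ρ γ a = ↑b), c a • ρ γ a := by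
      intro b
      rw [hg]
      rw [Finset.sum_smul]
      refine Finset.sum_congr rfl (fun γ _ => ?_)
      rw [Finset.sum_smul]
      refine Finset.sum_congr rfl (fun a ha => ?_)
      rw [(Finset.mem_filter.mp ha).2]
    calc ∑ b : ↥(↑Δ : Set X), g b • (b : X)
        = ∑ b : ↥(↑Δ : Set X), ∑ γ : Γ, ∑ a ∈ Δ.filter (fun a => ρ γ a = ↑b), c a • ρ γ a := by
          exact Finset.sum_congr rfl (fun b _ => e1 b)
      _ = ∑ γ : Γ, ∑ b : ↥(↑Δ : Set X), ∑ a ∈ Δ.filter (fun a => ρ γ a = ↑b), c a • ρ γ a := by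
          rw [Finset.sum_comm]
      _ = ∑ γ : Γ, ∑ b ∈ Δ, ∑ a ∈ Δ.filter (fun a => ρ γ a = b), c a • ρ γ a := by
          refine Finset.sum_congr rfl (fun γ _ => ?_)
          exact Finset.sum_coe_sort Δ (fun b => ∑ a ∈ Δ.filter (fun a => ρ γ a = b), c a • ρ γ a)
      _ = ∑ γ : Γ, ∑ a ∈ Δ, c a • ρ γ a := by
          refine Finset.sum_congr rfl (fun γ _ => ?_)
          exact Finset.sum_fiberwise_of_maps_to (fun a ha => hstab γ a ha) _
      _ = ∑ γ : Γ, ρ γ r := by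
          refine Finset.sum_congr rfl (fun γ _ => ?_)
          rw [hrep, map_sum]
          exact Finset.sum_congr rfl (fun a _ => (map_zsmul (ρ γ : X ≃+ X) (c a) a).symm)
      _ = normMap ρ r := (normMap_apply ρ r).symm
      _ = 0 := h0
  have hg0 : ∀ b : ↥(↑Δ : Set X), g b = 0 :=
    Fintype.linearIndependent_iff.mp hΔ.2.1 g hsum
  have hc0 : ∀ a ∈ Δ, c a = 0 := by
    intro a0 ha0
    have hb := hg0 ⟨a0, ha0⟩
    rw [hg] at hb
    have hone : (1 : Γ) ∈ (Finset.univ : Finset Γ) := Finset.mem_univ 1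
    have ha0f : a0 ∈ Δ.filter (fun a => ρ (1 : Γ) a = a0) := by
      refine Finset.mem_filter.mpr ⟨ha0, ?_⟩
      rw [map_one]; rfl
    rcases hsign with hpos | hneg
    · have hin : ∀ γ ∈ (Finset.univ : Finset Γ),
          0 ≤ ∑ a ∈ Δ.filter (fun a => ρ γ a = a0), c a := fun γ _ =>
        Finset.sum_nonneg (fun a ha => hpos a (Finset.mem_filter.mp ha).1)
      have h1 : ∑ a ∈ Δ.filter (fun a => ρ (1:Γ) a = a0), c a = 0 :=
        (Finset.sum_eq_zero_iff_of_nonneg hin).mp hb 1 hone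
      exact (Finset.sum_eq_zero_iff_of_nonneg
        (fun a ha => hpos a (Finset.mem_filter.mp ha).1)).mp h1 a0 ha0f
    · have hin : ∀ γ ∈ (Finset.univ : Finset Γ),
          ∑ a ∈ Δ.filter (fun a => ρ γ a = a0), c a ≤ 0 := fun γ _ =>
        Finset.sum_nonpos (fun a ha => hneg a (Finset.mem_filter.mp ha).1)
      have h1 : ∑ a ∈ Δ.filter (fun a => ρ (1:Γ) a = a0), c a = 0 :=
        (Finset.sum_eq_zero_iff_of_nonpos hin).mp hb 1 hone
      exact (Finset.sum_eq_zero_iff_of_nonpos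
        (fun a ha => hneg a (Finset.mem_filter.mp ha).1)).mp h1 a0 ha0f
  have : r = 0 := by
    rw [hrep]
    exact Finset.sum_eq_zero (fun a ha => by rw [hc0 a ha, zero_smul])
  exact Ψ.root_ne_zero hr this

lemma sum_neg_ones {α : Type} (s : Finset α) (f : α → ℤ)
    (h : ∀ x ∈ s, f x = 0 ∨ f x = -1) :
    ∑ x ∈ s, f x = -(((s.filter (fun x => f x ≠ 0)).card : ℤ)) := by
  classical
  rw [← Finset.sum_filter_add_sum_filter_not s (fun x => f x ≠ 0)]
  have h1 : ∑ x ∈ s.filter (fun x => f x ≠ 0), f x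
      = ∑ _x ∈ s.filter (fun x => f x ≠ 0), (-1 : ℤ) := by
    refine Finset.sum_congr rfl (fun x hx => ?_)
    obtain ⟨hxs, hx0⟩ := Finset.mem_filter.mp hx
    rcases h x hxs with h' | h'
    · exact absurd h' hx0
    · exact h'
  have h2 : ∑ x ∈ s.filter (fun x => ¬ f x ≠ 0), f x = 0 := by
    refine Finset.sum_eq_zero (fun x hx => ?_)
    exact not_not.mp (Finset.mem_filter.mp hx).2
  rw [h1, h2, Finset.sum_const, add_zero]
  simp

lemma orb_pair [Module.Free ℤ X] (hact : RDAction Ψ ρ ρ') {Δ : Finset X} (hΔ : Ψ.IsBase Δ)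
    (hstab : ∀ γ : Γ, ∀ a ∈ Δ, ρ γ a ∈ Δ) {β : X} (hβ : β ∈ Ψ.roots)
    {θ θ' : X} (hθ : θ ∈ orb ρ β) (hθ' : θ' ∈ orb ρ β) (hne : θ ≠ θ') :
    Ψ.pair θ (Ψ.coroot θ') = Ψ.pair θ' (Ψ.coroot θ) ∧
      (Ψ.pair θ (Ψ.coroot θ') = 0 ∨ Ψ.pair θ (Ψ.coroot θ') = -1) := by
  have hθr : θ ∈ Ψ.roots := orb_sub_roots hact hβ hθ
  have hθ'r : θ' ∈ Ψ.roots := orb_sub_roots hact hβ hθ'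
  set b := Ψ.B β β with hbdef
  have hb : 0 < b := Ψ.B_root_pos hβ
  have hbθ : Ψ.B θ θ = b := B_orb_eq hact hθ
  have hbθ' : Ψ.B θ' θ' = b := B_orb_eq hact hθ'
  set p := Ψ.pair θ (Ψ.coroot θ') with hpdef
  set q := Ψ.pair θ' (Ψ.coroot θ) with hqdef
  have ki1 : p * b = 2 * Ψ.B θ θ' := by rw [hpdef, ← hbθ']; exact Ψ.B_ki hθr hθ'r
  have ki2 : q * b = 2 * Ψ.B θ' θ := by rw [hqdef, ← hbθ]; exact Ψ.B_ki hθ'r hθr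
  have hpq : p = q := by
    have : p * b = q * b := by rw [ki1, ki2, Ψ.B_symm]
    exact mul_right_cancel₀ hb.ne' this
  have hcs : Ψ.B θ θ' * Ψ.B θ θ' ≤ b * b := by
    have := Ψ.B_cs hθr θ'
    rwa [hbθ, hbθ'] at this
  have hp2 : p * p ≤ 4 := by
    have e1 : (p * b) * (p * b) = 4 * (Ψ.B θ θ' * Ψ.B θ θ') := by rw [ki1]; ring
    have e2 : p * p * (b * b) ≤ 4 * (b * b) := by nlinarith
    have hbb : 0 < b * b := mul_pos hb hb
    exact le_of_mul_le_mul_right e2 hbb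
  have hcases : p = -2 ∨ p = -1 ∨ p = 0 ∨ p = 1 ∨ p = 2 := by
    have h1 : -2 ≤ p := by nlinarith
    have h2 : p ≤ 2 := by nlinarith
    omega
  refine ⟨hpq, ?_⟩
  rcases hcases with hc | hc | hc | hc | hc
  · -- p = -2 : impossible
    exfalso
    refine Ψ.two_two hθr hθ'r (Or.inr rfl) ?_ ?_ ?_
    · rw [← hpdef, hc]; ring
    · rw [← hqdef, ← hpq, hc]; ring
    · intro h0
      have hsum0 : θ + θ' = 0 := by
        have : θ - (-1 : ℤ) • θ' = θ + θ' := by module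
        rwa [this] at h0
      have hN : normMap ρ (θ + θ') = (2 : ℤ) • normMap ρ β := by
        rw [map_add, norm_orb hθ, norm_orb hθ']
        module
      rw [hsum0, map_zero] at hN
      have hNβ : normMap ρ β ≠ 0 := norm_root_ne_zero hΔ hstab hβ
      have := (smul_eq_zero.mp hN.symm)
      rcases this with h | h
      · norm_num at h
      · exact hNβ h
  · exact Or.inr hc
  · exact Or.inl hc
  · -- p = 1 : impossible
    exfalso
    have hmem : θ - p • θ' ∈ Ψ.roots := Ψ.reflect_mem θ' hθ'r θ hθr
    rw [hc, one_smul] at hmem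
    have hN : normMap ρ (θ - θ') = 0 := by
      rw [map_sub, norm_orb hθ, norm_orb hθ', sub_self]
    exact norm_root_ne_zero hΔ hstab hmem hN
  · -- p = 2 : impossible
    exfalso
    refine Ψ.two_two hθr hθ'r (Or.inl rfl) ?_ ?_ ?_
    · rw [← hpdef, hc]; ring
    · rw [← hqdef, ← hpq, hc]; ring
    · intro h0
      have : θ = θ' := by
        have h1 : θ - (1 : ℤ) • θ' = θ - θ' := by module
        rw [h1] at h0
        exact sub_eq_zero.mp h0
      exact hne this

lemma deg_orb [Module.Free ℤ X] (hact : RDAction Ψ ρ ρ') {β θ : X} (hβ : β ∈ Ψ.roots)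
    (hθ : θ ∈ orb ρ β) :
    (((orb ρ β).erase θ).filter (fun t => Ψ.pair θ (Ψ.coroot t) ≠ 0)).card
      = (((orb ρ β).erase β).filter (fun t => Ψ.pair β (Ψ.coroot t) ≠ 0)).card := by
  obtain ⟨γ, rfl⟩ := mem_orb.mp hθ
  have hpg : ∀ t ∈ orb ρ β, Ψ.pair (ρ γ β) (Ψ.coroot (ρ γ t)) = Ψ.pair β (Ψ.coroot t) :=
    fun t ht => pair_gamma hact γ β (orb_sub_roots hact hβ ht)
  have himg : ((orb ρ β).erase (ρ γ β)).filter (fun t => Ψ.pair (ρ γ β) (Ψ.coroot t) ≠ 0)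
      = (((orb ρ β).erase β).filter (fun t => Ψ.pair β (Ψ.coroot t) ≠ 0)).image (ρ γ) := by
    ext t
    simp only [Finset.mem_filter, Finset.mem_erase, Finset.mem_image]
    constructor
    · rintro ⟨⟨htne, htorb⟩, htp⟩
      refine ⟨ρ γ⁻¹ t, ⟨⟨?_, mem_orb_of_mem htorb γ⁻¹⟩, ?_⟩, rho_apply_inv ρ γ t⟩
      · intro h
        apply htne
        rw [← rho_apply_inv ρ γ t, h]
      · have := hpg (ρ γ⁻¹ t) (mem_orb_of_mem htorb γ⁻¹)
        rw [rho_apply_inv ρ γ t] at this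
        rw [← this]; exact htp
    · rintro ⟨t0, ⟨⟨ht0ne, ht0orb⟩, ht0p⟩, rfl⟩
      refine ⟨⟨?_, mem_orb_of_mem ht0orb γ⟩, ?_⟩
      · intro h
        exact ht0ne ((ρ γ).injective h)
      · rwa [hpg t0 ht0orb]
  rw [himg, Finset.card_image_of_injective _ (ρ γ).injective]

end Orbit

set_option maxHeartbeats 1000000 in
/-- Let `Ψ` be a root datum with finite automorphism group
`Γ` stabilizing a base, and suppose `β, β' ∈ Φ` are distinct with
`i*β = i*β'`.  Then `∑_{θ ∈ Γ·β} ⟨β', θ^∨⟩ = ∑_{θ ∈ Γ·β} ⟨β, θ^∨⟩`, and this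
common value equals `2` if the orbit `Γ·β` is pairwise orthogonal and `1`
otherwise. -/
theorem orbit_coroot_sum_pairing
    [Fintype Γ] [Module.Free ℤ X] [Module.Finite ℤ X]
    (Ψ : ZRootDatum X Y) (ρ : Γ →* AddAut X) (ρ' : Γ →* AddAut Y)
    (hact : RDAction Ψ ρ ρ') (Δ : Finset X) (hΔ : Ψ.IsBase Δ)
    (hstab : ∀ γ : Γ, ∀ a ∈ Δ, ρ γ a ∈ Δ)
    (β β' : X) (hβ : β ∈ Ψ.roots) (hβ' : β' ∈ Ψ.roots)
    (hne : β ≠ β') (heq : istar ρ β = istar ρ β') :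
    (∑ θ ∈ orb ρ β, Ψ.pair β' (Ψ.coroot θ)) = (∑ θ ∈ orb ρ β, Ψ.pair β (Ψ.coroot θ)) ∧
    (∑ θ ∈ orb ρ β, Ψ.pair β (Ψ.coroot θ)) =
      (if IsOrthogonalSet Ψ (orb ρ β) then 2 else 1) := by
  classical
  have horb_roots : ∀ θ ∈ orb ρ β, θ ∈ Ψ.roots := fun θ h => orb_sub_roots hact hβ h
  set b := Ψ.B β β with hbdef
  have hbpos : 0 < b := Ψ.B_root_pos hβ
  have hNβ : normMap ρ β ≠ 0 := norm_root_ne_zero hΔ hstab hβ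
  -- ===================== PART 1 =====================
  have hinv : ∀ (γ : Γ) (x : X),
      (∑ θ ∈ orb ρ β, Ψ.pair (ρ γ x) (Ψ.coroot θ)) = ∑ θ ∈ orb ρ β, Ψ.pair x (Ψ.coroot θ) := by
    intro γ x
    refine Finset.sum_nbij' (fun θ => ρ γ⁻¹ θ) (fun θ => ρ γ θ)
      (fun a ha => mem_orb_of_mem ha γ⁻¹) (fun a ha => mem_orb_of_mem ha γ)
      (fun a _ => rho_apply_inv ρ γ a) (fun a _ => rho_inv_apply ρ γ a) ?_
    intro a ha
    have har : ρ γ⁻¹ a ∈ Ψ.roots := horb_roots _ (mem_orb_of_mem ha γ⁻¹)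
    conv_lhs => rw [show a = ρ γ (ρ γ⁻¹ a) from (rho_apply_inv ρ γ a).symm]
    rw [pair_gamma hact γ x har]
  have hN : ∀ x : X, (∑ θ ∈ orb ρ β, Ψ.pair (normMap ρ x) (Ψ.coroot θ))
      = (Fintype.card Γ : ℤ) * ∑ θ ∈ orb ρ β, Ψ.pair x (Ψ.coroot θ) := by
    intro x
    calc ∑ θ ∈ orb ρ β, Ψ.pair (normMap ρ x) (Ψ.coroot θ)
        = ∑ θ ∈ orb ρ β, ∑ γ : Γ, Ψ.pair (ρ γ x) (Ψ.coroot θ) := by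
          refine Finset.sum_congr rfl (fun θ _ => ?_)
          rw [normMap_apply, Ψ.pair_sum_left]
      _ = ∑ γ : Γ, ∑ θ ∈ orb ρ β, Ψ.pair (ρ γ x) (Ψ.coroot θ) := Finset.sum_comm
      _ = ∑ _γ : Γ, ∑ θ ∈ orb ρ β, Ψ.pair x (Ψ.coroot θ) :=
          Finset.sum_congr rfl (fun γ _ => hinv γ x)
      _ = (Fintype.card Γ : ℤ) * ∑ θ ∈ orb ρ β, Ψ.pair x (Ψ.coroot θ) := by
          rw [Finset.sum_const, Finset.card_univ, nsmul_eq_mul]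
  have hNeq : normMap ρ β = normMap ρ β' := by
    have heq' := heq
    simp only [istar] at heq'
    obtain ⟨z, hz, hzeq⟩ := (QuotientAddGroup.mk'_eq_mk' _).mp heq'
    have hzk : normMap ρ z = 0 := AddMonoidHom.mem_ker.mp hz
    rw [← hzeq, map_add, hzk, add_zero]
  have hcard : (Fintype.card Γ : ℤ) ≠ 0 := by
    have := Fintype.card_pos (α := Γ)
    positivity
  have hpart1 : (∑ θ ∈ orb ρ β, Ψ.pair β' (Ψ.coroot θ))
      = ∑ θ ∈ orb ρ β, Ψ.pair β (Ψ.coroot θ) := by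
    have h1 := hN β
    have h2 := hN β'
    rw [hNeq, h2] at h1
    exact mul_left_cancel₀ hcard h1
  refine ⟨hpart1, ?_⟩
  -- ===================== PART 2 =====================
  have hvals : ∀ t ∈ (orb ρ β).erase β,
      Ψ.pair β (Ψ.coroot t) = 0 ∨ Ψ.pair β (Ψ.coroot t) = -1 := by
    intro t ht
    obtain ⟨htne, htorb⟩ := Finset.mem_erase.mp ht
    exact (orb_pair hact hΔ hstab hβ self_mem_orb htorb (Ne.symm htne)).2
  set dfs := ((orb ρ β).erase β).filter (fun t => Ψ.pair β (Ψ.coroot t) ≠ 0) with hdfs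
  have hsum2 : (∑ θ ∈ orb ρ β, Ψ.pair β (Ψ.coroot θ)) = 2 - (dfs.card : ℤ) := by
    rw [← Finset.sum_erase_add _ _ (self_mem_orb (ρ := ρ) (β := β)), Ψ.pair_self β hβ,
      sum_neg_ones _ _ hvals]
    ring
  by_cases horth : IsOrthogonalSet Ψ (orb ρ β)
  · -- orthogonal case : value 2
    rw [if_pos horth, hsum2]
    have hempty : dfs = ∅ := by
      rw [hdfs]
      refine Finset.filter_eq_empty_iff.mpr ?_
      intro t ht
      obtain ⟨htne, htorb⟩ := Finset.mem_erase.mp ht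
      intro hp
      exact hp (horth β self_mem_orb t htorb (Ne.symm htne))
    rw [hempty]
    simp
  · -- non-orthogonal case : value 1
    rw [if_neg horth, hsum2]
    have hge1 : 1 ≤ dfs.card := by
      rw [Finset.one_le_card]
      simp only [IsOrthogonalSet, not_forall] at horth
      obtain ⟨θ1, hθ1, θ2, hθ2, hne12, hp12⟩ := horth
      obtain ⟨γ1, rfl⟩ := mem_orb.mp hθ1
      refine ⟨ρ γ1⁻¹ θ2, ?_⟩
      rw [hdfs]
      refine Finset.mem_filter.mpr ⟨Finset.mem_erase.mpr ⟨?_, mem_orb_of_mem hθ2 γ1⁻¹⟩, ?_⟩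
      · intro h
        apply hne12
        rw [← rho_apply_inv ρ γ1 θ2, h]
      · have := pair_gamma hact γ1 β (horb_roots _ (mem_orb_of_mem hθ2 γ1⁻¹))
        rw [rho_apply_inv ρ γ1 θ2] at this
        rw [← this]
        exact hp12
    have hle1 : dfs.card ≤ 1 := by
      by_contra hgt
      push_neg at hgt
      -- regularity: every vertex of the orbit has dfs.card ≥ 2 neighbours
      have hreg : ∀ θ ∈ orb ρ β,
          (((orb ρ β).erase θ).filter (fun t => Ψ.pair θ (Ψ.coroot t) ≠ 0)).card
            = dfs.card := by
        intro θ hθ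
        rw [hdfs]
        exact deg_orb hact hβ hθ
      -- maximal summable subset A of the orbit
      set 𝒜 := (orb ρ β).powerset.filter
        (fun A => A.Nonempty ∧ (∑ θ ∈ A, θ) ∈ Ψ.roots) with h𝒜
      have h𝒜ne : 𝒜.Nonempty := by
        refine ⟨{β}, Finset.mem_filter.mpr ⟨Finset.mem_powerset.mpr ?_,
          ⟨β, Finset.mem_singleton_self β⟩, by simpa using hβ⟩⟩
        intro t ht
        rw [Finset.mem_singleton.mp ht]
        exact self_mem_orb
      obtain ⟨A, hA𝒜, hAmax⟩ := Finset.exists_max_image 𝒜 Finset.card h𝒜ne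
      have hAsub : A ⊆ orb ρ β := Finset.mem_powerset.mp (Finset.mem_filter.mp hA𝒜).1
      have hAprops := (Finset.mem_filter.mp hA𝒜).2
      set u := ∑ θ ∈ A, θ with hu
      have hur : u ∈ Ψ.roots := hAprops.2
      have hAroots : ∀ θ ∈ A, θ ∈ Ψ.roots := fun θ h => horb_roots θ (hAsub h)
      have hbu : 0 < Ψ.B u u := Ψ.B_root_pos hur
      have hNu : normMap ρ u = (A.card : ℤ) • normMap ρ β := by
        rw [hu, map_sum]
        rw [Finset.sum_congr rfl (fun t ht => norm_orb (hAsub ht))]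
        rw [Finset.sum_const]
        simp
      -- the key per-vertex identity
      have hterm : ∀ θ ∈ A, 2 * Ψ.B θ u
          = (2 - (((A.erase θ).filter (fun t => Ψ.pair θ (Ψ.coroot t) ≠ 0)).card : ℤ)) * b := by
        intro θ hθA
        have hθr := hAroots θ hθA
        have hθorb := hAsub hθA
        have e1 : Ψ.B θ u = ∑ t ∈ A, Ψ.B θ t := by rw [hu, Ψ.B_sum_right]
        have e2 : ∀ t ∈ A.erase θ, 2 * Ψ.B θ t = Ψ.pair θ (Ψ.coroot t) * b := by
          intro t ht
          have htA := Finset.mem_erase.mp ht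
          have htr := hAroots t htA.2
          have := Ψ.B_ki hθr htr
          rw [B_orb_eq hact (hAsub htA.2)] at this
          rw [← hbdef] at this
          linarith
        have e3 : ∑ t ∈ A.erase θ, Ψ.pair θ (Ψ.coroot t)
            = -((((A.erase θ).filter (fun t => Ψ.pair θ (Ψ.coroot t) ≠ 0)).card : ℤ)) := by
          refine sum_neg_ones _ _ (fun t ht => ?_)
          have htA := Finset.mem_erase.mp ht
          exact (orb_pair hact hΔ hstab hβ hθorb (hAsub htA.2) (Ne.symm htA.1)).2
        have e4 : Ψ.B θ θ = b := by rw [B_orb_eq hact hθorb, ← hbdef]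
        calc 2 * Ψ.B θ u = ∑ t ∈ A, 2 * Ψ.B θ t := by rw [e1, Finset.mul_sum]
          _ = (∑ t ∈ A.erase θ, 2 * Ψ.B θ t) + 2 * Ψ.B θ θ := (Finset.sum_erase_add _ _ hθA).symm
          _ = (∑ t ∈ A.erase θ, Ψ.pair θ (Ψ.coroot t) * b) + 2 * b := by
              rw [Finset.sum_congr rfl e2, e4]
          _ = (∑ t ∈ A.erase θ, Ψ.pair θ (Ψ.coroot t)) * b + 2 * b := by
              rw [Finset.sum_mul]
          _ = _ := by rw [e3]; ring
      -- there must exist an edge leaving A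
      by_cases hout : ∃ θ0 ∈ A, ∃ t ∈ orb ρ β, t ∉ A ∧ Ψ.pair θ0 (Ψ.coroot t) ≠ 0
      · obtain ⟨θ0, hθ0A, θ', hθ'orb, hθ'A, hθ0p⟩ := hout
        have hθ'r : θ' ∈ Ψ.roots := horb_roots θ' hθ'orb
        have hbθ' : Ψ.B θ' θ' = b := by rw [B_orb_eq hact hθ'orb, ← hbdef]
        -- the pairing of u against θ'
        set k := (A.filter (fun t => Ψ.pair t (Ψ.coroot θ') ≠ 0)).card with hk
        have hkge1 : 1 ≤ k := by
          rw [hk, Finset.one_le_card]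
          exact ⟨θ0, Finset.mem_filter.mpr ⟨hθ0A, hθ0p⟩⟩
        have hpu : Ψ.pair u (Ψ.coroot θ') = -(k : ℤ) := by
          rw [hu, Ψ.pair_sum_left, hk]
          refine sum_neg_ones _ _ (fun t ht => ?_)
          have htne : t ≠ θ' := fun h => hθ'A (h ▸ ht)
          exact (orb_pair hact hΔ hstab hβ (hAsub ht) hθ'orb htne).2
        have kiu : Ψ.pair u (Ψ.coroot θ') * b = 2 * Ψ.B u θ' := by
          rw [← hbθ']; exact Ψ.B_ki hur hθ'r
        have kiq : Ψ.pair θ' (Ψ.coroot u) * Ψ.B u u = 2 * Ψ.B u θ' := by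
          rw [Ψ.B_symm u θ']; exact Ψ.B_ki hθ'r hur
        set q := Ψ.pair θ' (Ψ.coroot u) with hq
        -- maximality contradiction helper
        have hmaxcontra : u + θ' ∈ Ψ.roots → False := by
          intro hroot
          have hins : insert θ' A ∈ 𝒜 := by
            rw [h𝒜]
            refine Finset.mem_filter.mpr ⟨Finset.mem_powerset.mpr ?_, ?_, ?_⟩
            · intro t ht
              rcases Finset.mem_insert.mp ht with h | h
              · rw [h]; exact hθ'orb
              · exact hAsub h
            · exact ⟨θ', Finset.mem_insert_self θ' A⟩
            · rw [Finset.sum_insert hθ'A, ← hu, add_comm]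
              exact hroot
          have := hAmax (insert θ' A) hins
          rw [Finset.card_insert_of_notMem hθ'A] at this
          omega
        -- q is negative
        have hqneg : q < 0 := by
          have h2B : 2 * Ψ.B u θ' = -(k:ℤ) * b := by rw [← kiu, hpu]
          have : q * Ψ.B u u = -(k:ℤ) * b := by rw [kiq]; exact h2B
          nlinarith [hkge1, hbpos, hbu]
        -- Cauchy-Schwarz : (pu) * q ≤ 4
        have hpq4 : (k : ℤ) * (-q) ≤ 4 := by
          have hcs := Ψ.B_cs hur θ'
          rw [hbθ'] at hcs
          have e5 : (Ψ.pair u (Ψ.coroot θ') * b) * (q * Ψ.B u u) = 4 * (Ψ.B u θ' * Ψ.B u θ') := by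
            rw [kiu, kiq]
            ring
          rw [hpu] at e5
          nlinarith [hbpos, hbu]
        by_cases hk1 : k = 1
        · -- reflect u through θ' : u + θ' is a root
          have hco : Ψ.pair u (Ψ.coroot θ') = -1 := by rw [hpu, hk1]; norm_num
          have hrefl := Ψ.reflect_mem θ' hθ'r u hur
          rw [hco] at hrefl
          have heq2 : u - (-1:ℤ) • θ' = u + θ' := by module
          rw [heq2] at hrefl
          exact hmaxcontra hrefl
        · have hk2 : 2 ≤ k := by omega
          have hqcase : q = -1 ∨ q = -2 := by
            have : -q ≤ 2 := by nlinarith [hpq4, hk2, hqneg]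
            omega
          rcases hqcase with hq1 | hq2
          · -- reflect θ' through u : u + θ' is a root
            have hrefl := Ψ.reflect_mem u hur θ' hθ'r
            rw [← hq, hq1] at hrefl
            have : θ' - (-1:ℤ) • u = u + θ' := by module
            rw [this] at hrefl
            exact hmaxcontra hrefl
          · -- q = -2 forces k = 2, a (-2,-2)-pair : impossible
            have hkval : k = 2 := by
              rw [hq2] at hpq4
              have hk4 : (k : ℤ) * 2 ≤ 4 := by linarith
              have hkle : (k : ℤ) ≤ 2 := by linarith
              have : k ≤ 2 := by exact_mod_cast hkle
              omega
            refine Ψ.two_two hur hθ'r (Or.inr rfl) ?_ ?_ ?_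
            · rw [hpu, hkval]; ring
            · rw [← hq, hq2]; ring
            · intro h0
              have hsum0 : u + θ' = 0 := by
                have : u - (-1 : ℤ) • θ' = u + θ' := by module
                rwa [this] at h0
              have hN0 : normMap ρ (u + θ') = ((A.card : ℤ) + 1) • normMap ρ β := by
                rw [map_add, hNu, norm_orb hθ'orb]
                module
              rw [hsum0, map_zero] at hN0
              rcases smul_eq_zero.mp hN0.symm with h | h
              · have : (0:ℤ) < (A.card : ℤ) + 1 := by positivity
                omega
              · exact hNβ h
      · -- no edge leaves A : contradiction with positivity of B(u,u)
        push_neg at hout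
        have hfilter : ∀ θ ∈ A,
            ((A.erase θ).filter (fun t => Ψ.pair θ (Ψ.coroot t) ≠ 0))
              = (((orb ρ β).erase θ).filter (fun t => Ψ.pair θ (Ψ.coroot t) ≠ 0)) := by
          intro θ hθA
          ext t
          simp only [Finset.mem_filter, Finset.mem_erase]
          constructor
          · rintro ⟨⟨htne, htA⟩, htp⟩
            exact ⟨⟨htne, hAsub htA⟩, htp⟩
          · rintro ⟨⟨htne, htorb⟩, htp⟩
            refine ⟨⟨htne, ?_⟩, htp⟩
            by_contra htA
            exact htp (hout θ hθA t htorb htA)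
        have hsumB : 2 * Ψ.B u u = ∑ θ ∈ A, 2 * Ψ.B θ u := by
          conv_lhs => rw [hu, Ψ.B_sum_left]
          rw [Finset.mul_sum]
        have hbound : ∀ θ ∈ A, 2 * Ψ.B θ u ≤ 0 := by
          intro θ hθA
          rw [hterm θ hθA, hfilter θ hθA, hreg θ (hAsub hθA)]
          have : (2 : ℤ) - (dfs.card : ℤ) ≤ 0 := by
            have : (2 : ℤ) ≤ (dfs.card : ℤ) := by exact_mod_cast hgt
            omega
          nlinarith [hbpos]
        have : 2 * Ψ.B u u ≤ 0 := by
          rw [hsumB]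
          exact Finset.sum_nonpos hbound
        omega
    have : dfs.card = 1 := le_antisymm hle1 hge1
    rw [this]
    norm_num
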